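/- Fix a recursive bijection pair : ℕ×ℕ → ℕ encoding rational numbers as natural numbers (a rational a/b encoded as pair(a,b)). The probabilistic function I2P : ℕ → 𝒫(ℕ), defined on an encoding of a rational x by I2P(x)(1) = x and I2P(x)(0) = 1−x whenever 0 ≤ x ≤ 1 (and I2P(x)(y) = 0 in all other cases), is probabilistic recursive. -/

import Mathlib

noncomputable section
open scoped Classical

/-- A pseudodistribution on ℕ: pointwise nonnegative, summable, with total mass at most 1. -/
def IsPseudoDist (D : ℕ → ℝ) : Prop :=
  (∀ n, 0 ≤ D n) ∧ Summable D ∧ ∑' n, D n ≤ 1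

/-- Generalized composition:
(f ⊙ (g₁,…,gₙ))(x⃗)(y) = ∑_{z⃗} f(z⃗)(y) · ∏ᵢ gᵢ(x⃗)(zᵢ). -/
noncomputable def genComp {n k : ℕ} (f : (Fin n → ℕ) → ℕ → ℝ)
    (g : Fin n → (Fin k → ℕ) → ℕ → ℝ) : (Fin k → ℕ) → ℕ → ℝ :=
  fun x y => ∑' z : Fin n → ℕ, f z y * ∏ i, g i x (z i)

/-- Auxiliary for primitive recursion: h(x⃗,0) = f(x⃗),
h(x⃗,y+1)(w) = ∑_z g(x⃗,y,z)(w) · h(x⃗,y)(z). -/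
noncomputable def primRecAux {k : ℕ} (f : (Fin k → ℕ) → ℕ → ℝ)
    (g : (Fin (k + 2) → ℕ) → ℕ → ℝ) (x : Fin k → ℕ) : ℕ → ℕ → ℝ
  | 0 => f x
  | y + 1 => fun w =>
      ∑' z : ℕ, g (Fin.snoc (Fin.snoc x y) z) w * primRecAux f g x y z

/-- Primitive recursion of probabilistic functions, as a function on ℕ^(k+1). -/
noncomputable def primRec {k : ℕ} (f : (Fin k → ℕ) → ℕ → ℝ)
    (g : (Fin (k + 2) → ℕ) → ℕ → ℝ) : (Fin (k + 1) → ℕ) → ℕ → ℝ :=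
  fun v => primRecAux f g (Fin.init v) (v (Fin.last k))

/-- Minimization: (μf)(x⃗)(y) = f(x⃗,y)(0) · ∏_{z<y} (∑_{k>0} f(x⃗,z)(k)). -/
noncomputable def minimize {k : ℕ} (f : (Fin (k + 1) → ℕ) → ℕ → ℝ) :
    (Fin k → ℕ) → ℕ → ℝ :=
  fun x y =>
    f (Fin.snoc x y) 0 *
      ∏ z ∈ Finset.range y, ∑' m : {m : ℕ // 0 < m}, f (Fin.snoc x z) (m : ℕ)

/-- The class PR of probabilistic recursive functions: the smallest class of
probabilistic functions containing the basic probabilistic functions (zero,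
successor, projections, fair coin) and closed under generalized composition,
primitive recursion and minimization. -/
inductive PR : {k : ℕ} → ((Fin k → ℕ) → ℕ → ℝ) → Prop where
  /-- The zero function z(n) = Dirac(0). -/
  | zero : PR (fun (_ : Fin 1 → ℕ) (y : ℕ) => if y = 0 then (1 : ℝ) else 0)
  /-- The successor function s(n) = Dirac(n+1). -/
  | succ : PR (fun (x : Fin 1 → ℕ) (y : ℕ) => if y = x 0 + 1 then (1 : ℝ) else 0)
  /-- The projections Πⁿₘ(x⃗) = Dirac(xₘ). -/
  | proj {n : ℕ} (m : Fin n) :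
      PR (fun (x : Fin n → ℕ) (y : ℕ) => if y = x m then (1 : ℝ) else 0)
  /-- The fair coin r(x), assigning probability 1/2 to each of x and x+1. -/
  | coin : PR (fun (x : Fin 1 → ℕ) (y : ℕ) =>
      if y = x 0 ∨ y = x 0 + 1 then (1 : ℝ) / 2 else 0)
  /-- Closure under generalized composition. -/
  | comp {n k : ℕ} {f : (Fin n → ℕ) → ℕ → ℝ} {g : Fin n → (Fin k → ℕ) → ℕ → ℝ} :
      PR f → (∀ i, PR (g i)) → PR (genComp f g)
  /-- Closure under primitive recursion. -/
  | primrec {k : ℕ} {f : (Fin k → ℕ) → ℕ → ℝ} {g : (Fin (k + 2) → ℕ) → ℕ → ℝ} :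
      PR f → PR g → PR (primRec f g)
  /-- Closure under minimization. -/
  | minim {k : ℕ} {f : (Fin (k + 1) → ℕ) → ℕ → ℝ} :
      PR f → PR (minimize f)

/-- The probabilistic function I2P. A rational a/b is encoded as the natural
number Nat.pair a b (a fixed recursive bijection ℕ×ℕ ≃ ℕ with computable inverse).
On the encoding of a rational x with 0 ≤ x ≤ 1, I2P returns 1 with probability x
and 0 with probability 1−x; in all other cases it returns the zero distribution. -/
def I2P : (Fin 1 → ℕ) → ℕ → ℝ := fun v y =>
  let a : ℕ := (Nat.unpair (v 0)).1
  let b : ℕ := (Nat.unpair (v 0)).2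
  if 0 < b ∧ 0 ≤ (a : ℝ) / (b : ℝ) ∧ (a : ℝ) / (b : ℝ) ≤ 1 then
    (if y = 1 then (a : ℝ) / (b : ℝ)
     else if y = 0 then 1 - (a : ℝ) / (b : ℝ)
     else 0)
  else 0

/-! ### Dirac machinery -/

/-- Dirac distribution of a deterministic function. -/
def dirac' {k : ℕ} (ψ : (Fin k → ℕ) → ℕ) : (Fin k → ℕ) → ℕ → ℝ :=
  fun x y => if y = ψ x then 1 else 0

lemma PR_of_eq {k : ℕ} {f g : (Fin k → ℕ) → ℕ → ℝ} (hf : PR f) (h : ∀ x y, f x y = g x y) :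
    PR g := by
  have : f = g := funext fun x => funext fun y => h x y
  exact this ▸ hf

lemma genComp_dirac {n k : ℕ} (ψ : (Fin n → ℕ) → ℕ) (φ : Fin n → (Fin k → ℕ) → ℕ) :
    genComp (dirac' ψ) (fun i => dirac' (φ i)) = dirac' (fun x => ψ (fun i => φ i x)) := by
  funext x y
  unfold genComp dirac'
  rw [tsum_eq_single (fun i => φ i x)]
  · simp
  · intro z hz
    have : ∃ i, z i ≠ φ i x := by
      by_contra h
      push_neg at h
      exact hz (funext h)
    obtain ⟨i, hi⟩ := this
    have : (∏ j, if z j = φ j x then (1:ℝ) else 0) = 0 :=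
      Finset.prod_eq_zero (Finset.mem_univ i) (by simp [hi])
    simp [this]

lemma PR_dirac_proj {n : ℕ} (m : Fin n) : PR (dirac' (fun x : Fin n → ℕ => x m)) := PR.proj m

lemma PR_reindex {n k : ℕ} {f : (Fin n → ℕ) → ℕ → ℝ} (hf : PR f) (σ : Fin n → Fin k) :
    PR (fun x : Fin k → ℕ => f (fun i => x (σ i))) := by
  have h := PR.comp (g := fun i => dirac' (fun x : Fin k → ℕ => x (σ i))) hf
      (fun i => PR_dirac_proj (σ i))
  refine PR_of_eq h (fun x y => ?_)
  unfold genComp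
  rw [tsum_eq_single (fun i => x (σ i))]
  · simp [dirac']
  · intro z hz
    have : ∃ i, z i ≠ x (σ i) := by
      by_contra h
      push_neg at h
      exact hz (funext h)
    obtain ⟨i, hi⟩ := this
    have : (∏ j, dirac' (fun x : Fin k → ℕ => x (σ j)) x (z j)) = 0 :=
      Finset.prod_eq_zero (Finset.mem_univ i) (by simp [dirac', hi])
    simp [this]

lemma tsum_pos_dirac (c : ℕ) :
    (∑' m : {m : ℕ // 0 < m}, (if (m : ℕ) = c then (1:ℝ) else 0)) =
      if 0 < c then 1 else 0 := by
  rcases Nat.eq_zero_or_pos c with rfl | hc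
  · rw [if_neg (lt_irrefl 0)]
    have : ∀ m : {m : ℕ // 0 < m}, (if (m : ℕ) = 0 then (1:ℝ) else 0) = 0 := by
      intro m
      simp [Nat.pos_iff_ne_zero.mp m.2]
    rw [tsum_congr this, tsum_zero]
  · rw [if_pos hc, tsum_eq_single (⟨c, hc⟩ : {m : ℕ // 0 < m})]
    · simp
    · intro m hm
      have : (m : ℕ) ≠ c := fun h => hm (Subtype.ext h)
      simp [this]

lemma minimize_dirac {k : ℕ} (ψ : (Fin (k+1) → ℕ) → ℕ) :
    minimize (dirac' ψ) = fun x y =>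
      if ψ (Fin.snoc x y) = 0 ∧ ∀ z < y, ψ (Fin.snoc x z) ≠ 0 then (1:ℝ) else 0 := by
  funext x y
  unfold minimize dirac'
  have hprod : (∏ z ∈ Finset.range y, ∑' m : {m : ℕ // 0 < m},
      (if (m : ℕ) = ψ (Fin.snoc x z) then (1:ℝ) else 0)) =
      if ∀ z < y, ψ (Fin.snoc x z) ≠ 0 then 1 else 0 := by
    rw [Finset.prod_congr rfl (fun z _ => tsum_pos_dirac (ψ (Fin.snoc x z)))]
    by_cases h : ∀ z < y, ψ (Fin.snoc x z) ≠ 0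
    · rw [if_pos h]
      refine Finset.prod_eq_one (fun z hz => ?_)
      rw [if_pos (Nat.pos_iff_ne_zero.mpr (h z (Finset.mem_range.mp hz)))]
    · rw [if_neg h]
      push_neg at h
      obtain ⟨z, hz, hz0⟩ := h
      refine Finset.prod_eq_zero (Finset.mem_range.mpr hz) ?_
      rw [hz0, if_neg (lt_irrefl 0)]
  rw [hprod]
  by_cases h0 : ψ (Fin.snoc x y) = 0 <;> by_cases h1 : ∀ z < y, ψ (Fin.snoc x z) ≠ 0 <;>
    simp [h0, h1, Ne.symm]

/-- The arity-0 Dirac at 0 is PR. -/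
lemma PR_dirac_zero0 : PR (dirac' (fun _ : Fin 0 → ℕ => 0)) := by
  have h := PR.minim (PR.proj (0 : Fin 1))
  have e := minimize_dirac (fun v : Fin 1 → ℕ => v 0)
  rw [show dirac' (fun v : Fin 1 → ℕ => v 0) =
    (fun (x : Fin 1 → ℕ) (y : ℕ) => if y = x 0 then (1:ℝ) else 0) from rfl] at e
  rw [e] at h
  refine PR_of_eq h (fun x y => ?_)
  have hs : ∀ w : ℕ, (Fin.snoc x w : Fin 1 → ℕ) 0 = w := fun w => rfl
  simp only [hs, dirac']
  rcases Nat.eq_zero_or_pos y with rfl | hy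
  · simp
  · rw [if_neg, if_neg (by simpa using Nat.pos_iff_ne_zero.mp hy)]
    rintro ⟨h1, -⟩
    exact Nat.pos_iff_ne_zero.mp hy h1
/-! ### Dirac of primitive recursion -/

/-- The deterministic recursion operator matching `primRec`. -/
def natRec' {k : ℕ} (F : (Fin k → ℕ) → ℕ) (G : (Fin (k+2) → ℕ) → ℕ)
    (x : Fin k → ℕ) : ℕ → ℕ :=
  fun y => Nat.rec (F x) (fun y IH => G (Fin.snoc (Fin.snoc x y) IH)) y

lemma primRecAux_dirac {k : ℕ} (F : (Fin k → ℕ) → ℕ) (G : (Fin (k+2) → ℕ) → ℕ)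
    (x : Fin k → ℕ) (y : ℕ) :
    primRecAux (dirac' F) (dirac' G) x y =
      fun w => if w = natRec' F G x y then (1:ℝ) else 0 := by
  induction y with
  | zero => rfl
  | succ y ih =>
    funext w
    show (∑' z : ℕ, dirac' G (Fin.snoc (Fin.snoc x y) z) w *
        primRecAux (dirac' F) (dirac' G) x y z) = _
    rw [ih]
    rw [tsum_eq_single (natRec' F G x y)]
    · simp [dirac', natRec']
      congr
    · intro z hz
      simp [hz]

lemma primRec_dirac {k : ℕ} (F : (Fin k → ℕ) → ℕ) (G : (Fin (k+2) → ℕ) → ℕ) :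
    primRec (dirac' F) (dirac' G) =
      dirac' (fun v : Fin (k+1) → ℕ => natRec' F G (Fin.init v) (v (Fin.last k))) := by
  funext v
  exact primRecAux_dirac F G (Fin.init v) (v (Fin.last k))

/-- Diracs of primitive recursive functions are probabilistic recursive. -/
lemma dirac_PR : ∀ {n : ℕ} {f : List.Vector ℕ n → ℕ}, Nat.Primrec' f →
    PR (dirac' (fun x : Fin n → ℕ => f (List.Vector.ofFn x))) := by
  intro n f hf
  induction hf with
  | zero => exact PR_dirac_zero0
  | succ =>
    refine PR_of_eq PR.succ (fun x y => ?_)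
    simp [dirac', List.Vector.head_ofFn]
  | get i =>
    refine PR_of_eq (PR.proj i) (fun x y => ?_)
    simp [dirac', List.Vector.get_ofFn]
  | @comp m nn ff g hff hg ihf ihg =>
    have h := PR.comp ihf ihg
    rw [genComp_dirac] at h
    exact PR_of_eq h (fun x y => rfl)
  | @prec nn ff g hff hg ihf ihg =>
    -- reorder the arguments of g : params first, then y, then IH
    set σ : Fin (nn+2) → Fin (nn+2) :=
      Fin.cons (Fin.castSucc (Fin.last nn)) (Fin.cons (Fin.last (nn+1))
        (fun j : Fin nn => Fin.castSucc (Fin.castSucc j))) with hσ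
    have hg' := PR_reindex ihg σ
    have hg'' : PR (dirac' (fun w : Fin (nn+2) → ℕ =>
        g (List.Vector.ofFn (fun i => w (σ i))))) := hg'
    have h := PR.primrec ihf hg''
    rw [primRec_dirac] at h
    set τ : Fin (nn+1) → Fin (nn+1) :=
      Fin.snoc (fun i : Fin nn => i.succ) (0 : Fin (nn+1)) with hτdef
    have hτ := PR_reindex h τ
    refine PR_of_eq hτ (fun v y => ?_)
    simp only [dirac']
    congr 1
    -- identify the recursion argument and parameters
    have harg : (fun i => v (τ i)) (Fin.last nn) = v 0 := by
      simp [hτdef, Fin.snoc_last]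
    have hinit : Fin.init (fun i => v (τ i)) =
        fun i : Fin nn => v i.succ := by
      funext i
      simp [hτdef, Fin.init, Fin.snoc_castSucc]
    rw [show natRec' (fun x => ff (List.Vector.ofFn x))
          (fun w => g (List.Vector.ofFn (fun i => w (σ i))))
          (Fin.init (fun i => v (τ i)))
          ((fun i => v (τ i)) (Fin.last nn))
        = natRec' (fun x => ff (List.Vector.ofFn x))
          (fun w => g (List.Vector.ofFn (fun i => w (σ i))))
          (fun i : Fin nn => v i.succ) (v 0) by rw [harg, hinit]]
    have hofFn : ∀ (X : Fin nn → ℕ) (y IH : ℕ),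
        List.Vector.ofFn (fun i => (Fin.snoc (Fin.snoc X y) IH : Fin (nn+2) → ℕ) (σ i)) =
          y ::ᵥ IH ::ᵥ List.Vector.ofFn X := by
      intro X y IH
      refine List.Vector.ext fun i => ?_
      rw [List.Vector.get_ofFn]
      refine Fin.cases ?_ (fun j => ?_) i
      · simp [hσ, Fin.snoc_castSucc, Fin.snoc_last, List.Vector.get_cons_zero]
      · rw [List.Vector.get_cons_succ]
        refine Fin.cases ?_ (fun j' => ?_) j
        · simp [hσ, Fin.snoc_last, List.Vector.get_cons_zero]
        · simp [hσ, Fin.snoc_castSucc, List.Vector.get_cons_succ, List.Vector.get_ofFn]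
    have htail : (List.Vector.ofFn v).tail = List.Vector.ofFn (fun i : Fin nn => v i.succ) :=
      List.Vector.tail_ofFn v
    have hhead : (List.Vector.ofFn v).head = v 0 := List.Vector.head_ofFn v
    rw [hhead, htail]
    unfold natRec'
    have recEq : ∀ (A : ℕ) (B B' : ℕ → ℕ → ℕ), B = B' →
        (Nat.rec A B (v 0) : ℕ) = Nat.rec A B' (v 0) := by
      intro A B B' hBB
      rw [hBB]
    exact congrArg (fun t => (y = t))
      (recEq _ _ _ (funext fun y => funext fun IH => congrArg g (hofFn _ y IH)))
/-! ### Binary expansion of a rational in [0,1] -/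

/-- `Sab a b n = ⌊(a/b)·2^n⌋`, capped at `2^n - 1`. -/
def Sab (a b n : ℕ) : ℕ := min (a * 2^n / b) (2^n - 1)

lemma Sab_zero (a b : ℕ) : Sab a b 0 = 0 := by simp [Sab]

lemma Sab_eq_of_lt {a b : ℕ} (hab : a < b) (n : ℕ) : Sab a b n = a * 2^n / b := by
  have hb : 0 < b := lt_of_le_of_lt (Nat.zero_le a) hab
  have hp : 0 < (2:ℕ)^n := Nat.pow_pos (by norm_num)
  have h1 : a * 2^n / b < 2^n := by
    rw [Nat.div_lt_iff_lt_mul hb, mul_comm ((2:ℕ)^n) b]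
    exact (Nat.mul_lt_mul_right hp).mpr hab
  exact min_eq_left (Nat.le_sub_one_of_lt h1)

lemma Sab_eq_of_eq {b : ℕ} (hb : 0 < b) (n : ℕ) : Sab b b n = 2^n - 1 := by
  have : b * 2^n / b = 2^n := by
    rw [Nat.mul_div_cancel_left _ hb]
  rw [Sab, this]
  exact min_eq_right (Nat.sub_le _ _)

lemma Sab_succ_div2 {a b : ℕ} (hb : 0 < b) (hab : a ≤ b) (n : ℕ) :
    Sab a b (n+1) / 2 = Sab a b n := by
  rcases Nat.lt_or_ge a b with h | h
  · rw [Sab_eq_of_lt h, Sab_eq_of_lt h]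
    have e1 : a * 2^(n+1) = a * 2^n * 2 := by ring
    rw [e1, Nat.div_div_eq_div_mul]
    have e2 : a * 2^n * 2 / (b * 2) = a * 2^n / b :=
      Nat.mul_div_mul_right _ _ (by norm_num)
    rw [e2]
  · have hab' : a = b := le_antisymm hab h
    subst hab'
    rw [Sab_eq_of_eq hb, Sab_eq_of_eq hb]
    have h1 : (2:ℕ)^(n+1) = 2 * 2^n := by ring
    have h2 : 1 ≤ (2:ℕ)^n := Nat.one_le_two_pow
    omega

lemma Sab_succ {a b : ℕ} (hb : 0 < b) (hab : a ≤ b) (n : ℕ) :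
    Sab a b (n+1) = 2 * Sab a b n + Sab a b (n+1) % 2 := by
  conv_lhs => rw [← Nat.div_add_mod (Sab a b (n+1)) 2]
  rw [Sab_succ_div2 hb hab]

lemma Sab_le {a b : ℕ} (hb : 0 < b) (hab : a ≤ b) (n : ℕ) :
    (Sab a b n : ℝ) ≤ (a : ℝ) / b * 2^n := by
  have hb' : (0:ℝ) < b := by exact_mod_cast hb
  rcases Nat.lt_or_ge a b with h | h
  · rw [Sab_eq_of_lt h]
    calc ((a * 2^n / b : ℕ) : ℝ) ≤ ((a * 2^n : ℕ) : ℝ) / b := Nat.cast_div_le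
    _ = (a:ℝ) / b * 2^n := by push_cast; ring
  · have hab' : a = b := le_antisymm hab h
    subst hab'
    rw [Sab_eq_of_eq hb]
    have h2 : 1 ≤ (2:ℕ)^n := Nat.one_le_two_pow
    rw [Nat.cast_sub h2]
    have : (a:ℝ)/a = 1 := div_self (ne_of_gt hb')
    rw [this, one_mul]
    push_cast
    linarith
  
lemma Sab_ge {a b : ℕ} (hb : 0 < b) (hab : a ≤ b) (n : ℕ) :
    (a : ℝ) / b * 2^n - 1 ≤ (Sab a b n : ℝ) := by
  have hb' : (0:ℝ) < b := by exact_mod_cast hb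
  rcases Nat.lt_or_ge a b with h | h
  · rw [Sab_eq_of_lt h]
    have hdm := Nat.div_add_mod (a * 2^n) b
    have hmod : (a * 2^n) % b < b := Nat.mod_lt _ hb
    have hcast : ((a * 2^n : ℕ) : ℝ) = b * ((a * 2^n / b : ℕ) : ℝ) + ((a * 2^n % b : ℕ) : ℝ) := by
      exact_mod_cast hdm.symm
    have hmod' : ((a * 2^n % b : ℕ) : ℝ) < b := by exact_mod_cast hmod
    have h1 : (a:ℝ) * 2^n < b * ((a * 2^n / b : ℕ) : ℝ) + b := by
      push_cast at hcast
      linarith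
    rw [div_mul_eq_mul_div, sub_le_iff_le_add, div_le_iff₀ hb']
    ring_nf
    ring_nf at h1
    linarith
  · have hab' : a = b := le_antisymm hab h
    subst hab'
    rw [Sab_eq_of_eq hb]
    have h2 : 1 ≤ (2:ℕ)^n := Nat.one_le_two_pow
    rw [Nat.cast_sub h2]
    have : (a:ℝ)/a = 1 := div_self (ne_of_gt hb')
    rw [this, one_mul]
    push_cast
    linarith

/-- The `n`-th binary digit of `a/b`. -/
def bitab (a b n : ℕ) : ℕ := Sab a b (n+1) % 2

lemma bitab_lt (a b n : ℕ) : bitab a b n < 2 := Nat.mod_lt _ (by norm_num)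

lemma bitab_partial_sum {a b : ℕ} (hb : 0 < b) (hab : a ≤ b) (m : ℕ) :
    ∑ z ∈ Finset.range m, (bitab a b z : ℝ) * (1/2)^(z+1) = (Sab a b m : ℝ) * (1/2)^m := by
  induction m with
  | zero => simp [Sab_zero]
  | succ m ih =>
    rw [Finset.sum_range_succ, ih]
    rw [show Sab a b (m+1) = 2 * Sab a b m + bitab a b m from Sab_succ hb hab m]
    push_cast
    rw [pow_succ]
    ring

lemma summable_halfpow : Summable (fun z : ℕ => (1/2:ℝ)^(z+1)) := by
  have h : Summable (fun z : ℕ => (1/2:ℝ)^z) :=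
    summable_geometric_of_lt_one (by norm_num) (by norm_num)
  exact Summable.congr (h.mul_right (1/2)) fun z => (pow_succ _ _).symm

lemma tsum_halfpow : ∑' z : ℕ, (1/2:ℝ)^(z+1) = 1 := by
  have h : ∑' z : ℕ, (1/2:ℝ)^z * (1/2) = 2 * (1/2) := by
    rw [tsum_mul_right, tsum_geometric_two]
  rw [tsum_congr (fun z => (pow_succ (1/2:ℝ) z))]
  rw [h]
  norm_num

lemma summable_bitab {a b : ℕ} : Summable (fun z : ℕ => (bitab a b z : ℝ) * (1/2)^(z+1)) := by
  refine Summable.of_nonneg_of_le (fun z => ?_) (fun z => ?_) summable_halfpow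
  · positivity
  · have h1 : (bitab a b z : ℝ) ≤ 1 := by
      have := bitab_lt a b z
      exact_mod_cast Nat.lt_succ_iff.mp this
    have h2 : (0:ℝ) ≤ (1/2:ℝ)^(z+1) := by positivity
    nlinarith

lemma bitab_tsum {a b : ℕ} (hb : 0 < b) (hab : a ≤ b) :
    ∑' z : ℕ, (bitab a b z : ℝ) * (1/2)^(z+1) = (a:ℝ)/b := by
  have hsum := (summable_bitab (a := a) (b := b)).hasSum.tendsto_sum_nat
  have heq : (fun m => ∑ z ∈ Finset.range m, (bitab a b z : ℝ) * (1/2)^(z+1)) =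
      fun m => (Sab a b m : ℝ) * (1/2)^m := funext (bitab_partial_sum hb hab)
  rw [heq] at hsum
  have hlim : Filter.Tendsto (fun m => (Sab a b m : ℝ) * (1/2)^m)
      Filter.atTop (nhds ((a:ℝ)/b)) := by
    rw [tendsto_iff_norm_sub_tendsto_zero]
    refine squeeze_zero (fun m => norm_nonneg _) (fun m => ?_)
      (tendsto_pow_atTop_nhds_zero_of_lt_one (by norm_num) (by norm_num) (r := (1/2:ℝ)))
    have hpow : (0:ℝ) < (2:ℝ)^m := by positivity
    have hle := Sab_le hb hab m
    have hge := Sab_ge hb hab m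
    have hhalf : (1/2:ℝ)^m = ((2:ℝ)^m)⁻¹ := by
      rw [one_div, inv_pow]
    rw [Real.norm_eq_abs, abs_le, hhalf]
    have hinv : (0:ℝ) < ((2:ℝ)^m)⁻¹ := inv_pos.mpr hpow
    have hcancel : (a:ℝ)/b * 2^m * ((2:ℝ)^m)⁻¹ = (a:ℝ)/b := by
      rw [mul_assoc, mul_inv_cancel₀ (ne_of_gt hpow), mul_one]
    constructor
    · have h3 := mul_le_mul_of_nonneg_right hge hinv.le
      rw [sub_mul, hcancel, one_mul] at h3
      linarith
    · have h3 := mul_le_mul_of_nonneg_right hle hinv.le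
      rw [hcancel] at h3
      linarith
  exact tendsto_nhds_unique hsum hlim
lemma bit_tsum_one {a b : ℕ} (hb : 0 < b) (hab : a ≤ b) :
    ∑' z : ℕ, (if 1 = bitab a b z then (1:ℝ) else 0) * (1/2)^(z+1) = (a:ℝ)/b := by
  rw [← bitab_tsum hb hab]
  refine tsum_congr fun z => ?_
  have h := bitab_lt a b z
  interval_cases h : bitab a b z <;> simp
lemma bit_tsum_zero' {a b : ℕ} (hb : 0 < b) (hab : a ≤ b) :
    ∑' z : ℕ, (if 0 = bitab a b z then (1:ℝ) else 0) * (1/2)^(z+1) = 1 - (a:ℝ)/b := by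
  have hterm : ∀ z : ℕ, (if 0 = bitab a b z then (1:ℝ) else 0) * (1/2)^(z+1) =
      (1/2:ℝ)^(z+1) - (bitab a b z : ℝ) * (1/2)^(z+1) := by
    intro z
    have h := bitab_lt a b z
    interval_cases h : bitab a b z <;> simp
  rw [tsum_congr hterm, Summable.tsum_sub summable_halfpow summable_bitab, tsum_halfpow,
    bitab_tsum hb hab]

lemma bit_tsum_ge2 {a b : ℕ} (y : ℕ) (hy : 2 ≤ y) :
    ∑' z : ℕ, (if y = bitab a b z then (1:ℝ) else 0) * (1/2)^(z+1) = 0 := by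
  have hterm : ∀ z : ℕ, (if y = bitab a b z then (1:ℝ) else 0) * (1/2)^(z+1) = 0 := by
    intro z
    have h := bitab_lt a b z
    rw [if_neg (by omega), zero_mul]
  rw [tsum_congr hterm, tsum_zero]

/-! ### The comparison function is primitive recursive -/

/-- Validity of an encoded rational. -/
def validb (x : ℕ) : Prop := 0 < (Nat.unpair x).2 ∧ (Nat.unpair x).1 ≤ (Nat.unpair x).2

instance : DecidablePred validb := fun _ => instDecidableAnd

/-- The `z`-th binary digit of the rational encoded by `x`. -/
def bitfn (x z : ℕ) : ℕ := bitab (Nat.unpair x).1 (Nat.unpair x).2 z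

/-- The deterministic kernel of the minimization computing `I2P`. -/
def efun : List.Vector ℕ 3 → ℕ := fun v =>
  if validb (v.get 0) ∧ v.get 2 = bitfn (v.get 0) (v.get 1) then 0 else 1

lemma efun_primrec' : Nat.Primrec' efun := by
  refine Nat.Primrec'.of_prim ?_
  have hg0 : Primrec fun v : List.Vector ℕ 3 => v.get 0 :=
    Primrec.vector_get.comp .id (.const 0)
  have hg1 : Primrec fun v : List.Vector ℕ 3 => v.get 1 :=
    Primrec.vector_get.comp .id (.const 1)
  have hg2 : Primrec fun v : List.Vector ℕ 3 => v.get 2 :=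
    Primrec.vector_get.comp .id (.const 2)
  have hu : Primrec fun v : List.Vector ℕ 3 => Nat.unpair (v.get 0) :=
    Primrec.unpair.comp hg0
  have ha : Primrec fun v : List.Vector ℕ 3 => (Nat.unpair (v.get 0)).1 :=
    Primrec.fst.comp hu
  have hbv : Primrec fun v : List.Vector ℕ 3 => (Nat.unpair (v.get 0)).2 :=
    Primrec.snd.comp hu
  have hpow2 : Primrec₂ (fun m n : ℕ => m ^ n) := Primrec₂.unpaired'.mp Nat.Primrec.pow
  have hz1 : Primrec fun v : List.Vector ℕ 3 => v.get 1 + 1 := Primrec.succ.comp hg1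
  have hp2 : Primrec fun v : List.Vector ℕ 3 => 2 ^ (v.get 1 + 1) :=
    hpow2.comp (.const 2) hz1
  have hnum : Primrec fun v : List.Vector ℕ 3 => (Nat.unpair (v.get 0)).1 * 2^(v.get 1 + 1) :=
    Primrec.nat_mul.comp ha hp2
  have hdiv : Primrec fun v : List.Vector ℕ 3 =>
      (Nat.unpair (v.get 0)).1 * 2^(v.get 1 + 1) / (Nat.unpair (v.get 0)).2 :=
    Primrec.nat_div.comp hnum hbv
  have hsub : Primrec fun v : List.Vector ℕ 3 => 2^(v.get 1 + 1) - 1 :=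
    Primrec.nat_sub.comp hp2 (.const 1)
  have hmin : Primrec fun v : List.Vector ℕ 3 =>
      min ((Nat.unpair (v.get 0)).1 * 2^(v.get 1 + 1) / (Nat.unpair (v.get 0)).2)
        (2^(v.get 1 + 1) - 1) :=
    Primrec.nat_min.comp hdiv hsub
  have hbit : Primrec fun v : List.Vector ℕ 3 =>
      (min ((Nat.unpair (v.get 0)).1 * 2^(v.get 1 + 1) / (Nat.unpair (v.get 0)).2)
        (2^(v.get 1 + 1) - 1)) % 2 :=
    Primrec.nat_mod.comp hmin (.const 2)
  have hcond : PrimrecPred fun v : List.Vector ℕ 3 =>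
      0 < (Nat.unpair (v.get 0)).2 ∧ ((Nat.unpair (v.get 0)).1 ≤ (Nat.unpair (v.get 0)).2 ∧
        v.get 2 = (min ((Nat.unpair (v.get 0)).1 * 2^(v.get 1 + 1) / (Nat.unpair (v.get 0)).2)
          (2^(v.get 1 + 1) - 1)) % 2) :=
    PrimrecPred.and (Primrec.nat_lt.comp (.const 0) hbv)
      (PrimrecPred.and (Primrec.nat_le.comp ha hbv) (Primrec.eq.comp hg2 hbit))
  have h := Primrec.ite hcond (Primrec.const 0) (Primrec.const 1)
  refine h.of_eq fun v => ?_
  by_cases hc : 0 < (Nat.unpair (v.get 0)).2 ∧ ((Nat.unpair (v.get 0)).1 ≤ (Nat.unpair (v.get 0)).2 ∧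
        v.get 2 = (min ((Nat.unpair (v.get 0)).1 * 2^(v.get 1 + 1) / (Nat.unpair (v.get 0)).2)
          (2^(v.get 1 + 1) - 1)) % 2) <;>
    simp only [efun, validb, bitfn, bitab, Sab] <;>
    [(rw [if_pos hc]; exact (if_pos ⟨⟨hc.1, hc.2.1⟩, hc.2.2⟩).symm);
     (rw [if_neg hc]; exact (if_neg (fun h => hc ⟨h.1.1, h.1.2, h.2⟩)).symm)]
/-! ### The PR building blocks for I2P -/

/-- The comparison distribution: Dirac at the right digit when valid, null otherwise. -/
def Gfun : (Fin 2 → ℕ) → ℕ → ℝ := fun x y =>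
  if validb (x 0) ∧ y = bitfn (x 0) (x 1) then 1 else 0

lemma Gfun_PR : PR Gfun := by
  have hF : PR (dirac' (fun x : Fin 3 → ℕ => efun (List.Vector.ofFn x))) :=
    dirac_PR efun_primrec'
  have h := PR.minim (k := 2) hF
  rw [minimize_dirac] at h
  refine PR_of_eq h fun x y => ?_
  have hsnoc : ∀ z : ℕ, efun (List.Vector.ofFn (Fin.snoc x z)) =
      if validb (x 0) ∧ z = bitfn (x 0) (x 1) then 0 else 1 := by
    intro z
    have e0 : (Fin.snoc x z : Fin 3 → ℕ) 0 = x 0 := rfl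
    have e1 : (Fin.snoc x z : Fin 3 → ℕ) 1 = x 1 := rfl
    have e2 : (Fin.snoc x z : Fin 3 → ℕ) 2 = z := rfl
    simp only [efun, List.Vector.get_ofFn]
    rw [e0, e1, e2]
  have hzero : ∀ z : ℕ, efun (List.Vector.ofFn (Fin.snoc x z)) = 0 ↔
      validb (x 0) ∧ z = bitfn (x 0) (x 1) := by
    intro z
    rw [hsnoc z]
    split_ifs with h' <;> simp [h']
  show (if _ ∧ _ then (1:ℝ) else 0) = Gfun x y
  unfold Gfun
  by_cases hv : validb (x 0)
  · by_cases hy : y = bitfn (x 0) (x 1)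
    · have hm : efun (List.Vector.ofFn (Fin.snoc x y)) = 0 ∧
          ∀ z < y, efun (List.Vector.ofFn (Fin.snoc x z)) ≠ 0 := by
        refine ⟨(hzero y).mpr ⟨hv, hy⟩, fun z hz => ?_⟩
        rw [Ne, hzero z]
        rintro ⟨-, hzb⟩
        omega
      rw [if_pos hm, if_pos ⟨hv, hy⟩]
    · rw [if_neg (fun hc : _ ∧ _ => hy ((hzero y).mp hc.1).2),
        if_neg (fun hc : _ ∧ _ => hy hc.2)]
  · rw [if_neg (fun hc : _ ∧ _ => hv ((hzero y).mp hc.1).1),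
      if_neg (fun hc : _ ∧ _ => hv hc.1)]

/-- The geometric distribution `Geo x y = (1/2)^(y+1)`. -/
def GeoFn : (Fin 1 → ℕ) → ℕ → ℝ := fun _ y => (1/2:ℝ)^(y+1)

lemma GeoFn_PR : PR GeoFn := by
  have hzero2 : PR (dirac' (fun _ : Fin 2 → ℕ => 0)) :=
    PR_of_eq (dirac_PR (Nat.Primrec'.const 0)) (fun x y => rfl)
  have hcoin := PR.coin
  have hf2 := PR.comp hcoin (fun _ : Fin 1 => hzero2)
  have hf2eq : genComp (fun (x : Fin 1 → ℕ) (y : ℕ) =>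
        if y = x 0 ∨ y = x 0 + 1 then (1:ℝ)/2 else 0)
      (fun _ : Fin 1 => dirac' (fun _ : Fin 2 → ℕ => 0)) =
      fun (_ : Fin 2 → ℕ) (y : ℕ) => if y = 0 ∨ y = 1 then (1:ℝ)/2 else 0 := by
    funext x y
    unfold genComp
    rw [tsum_eq_single (fun _ : Fin 1 => 0)]
    · simp [dirac']
    · intro z hz
      have hz0 : z 0 ≠ 0 := fun h => hz (funext fun i => by rw [Subsingleton.elim i 0, h])
      have : (∏ i, dirac' (fun _ : Fin 2 → ℕ => 0) x (z i)) = 0 := by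
        rw [Fin.prod_univ_one]
        simp [dirac', hz0]
      rw [this, mul_zero]
  rw [hf2eq] at hf2
  have h := PR.minim (k := 1) hf2
  refine PR_of_eq h fun x y => ?_
  unfold minimize GeoFn
  have h0 : (fun (_ : Fin 2 → ℕ) (y : ℕ) => if y = 0 ∨ y = 1 then (1:ℝ)/2 else 0)
      (Fin.snoc x y) 0 = 1/2 := by norm_num
  have hin : ∀ z : ℕ, (∑' m : {m : ℕ // 0 < m},
      (fun (_ : Fin 2 → ℕ) (w : ℕ) => if w = 0 ∨ w = 1 then (1:ℝ)/2 else 0)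
        (Fin.snoc x z) (m : ℕ)) = 1/2 := by
    intro z
    rw [tsum_eq_single (⟨1, one_pos⟩ : {m : ℕ // 0 < m})]
    · norm_num
    · intro m hm
      have h1 : (m : ℕ) ≠ 1 := fun h => hm (Subtype.ext h)
      have h2 : (m : ℕ) ≠ 0 := Nat.pos_iff_ne_zero.mp m.2
      simp [h1, h2]
  rw [h0, Finset.prod_congr rfl (fun z _ => hin z), Finset.prod_const, Finset.card_range]
  rw [pow_succ]
  ring
/-- the probabilistic function I2P is probabilistic recursive. -/
theorem I2P_mem_PR : PR I2P := by
  have hg : ∀ i : Fin 2, PR ((![dirac' (fun x : Fin 1 → ℕ => x 0), GeoFn]) i) := by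
    intro i
    fin_cases i
    · exact PR.proj 0
    · exact GeoFn_PR
  have hcomp := PR.comp Gfun_PR hg
  refine PR_of_eq hcomp fun x y => ?_
  unfold genComp
  have hinj : Function.Injective (fun m : ℕ => (![x 0, m] : Fin 2 → ℕ)) := by
    intro m m' h
    simpa using congrFun h 1
  have hsupp : Function.support (fun z : Fin 2 → ℕ =>
      Gfun z y * ∏ i, (![dirac' (fun x : Fin 1 → ℕ => x 0), GeoFn]) i x (z i)) ⊆
      Set.range (fun m : ℕ => (![x 0, m] : Fin 2 → ℕ)) := by
    intro z hz
    rw [Function.mem_support] at hz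
    have hprod := (mul_ne_zero_iff.mp hz).2
    rw [Fin.prod_univ_two] at hprod
    have h0 := (mul_ne_zero_iff.mp hprod).1
    have hz0 : z 0 = x 0 := by
      by_contra hne
      apply h0
      simp [dirac', hne]
    exact ⟨z 1, by funext i; fin_cases i <;> simp [hz0]⟩
  rw [← Function.Injective.tsum_eq hinj hsupp]
  have hterm : ∀ m : ℕ, (fun z : Fin 2 → ℕ =>
        Gfun z y * ∏ i, (![dirac' (fun x : Fin 1 → ℕ => x 0), GeoFn]) i x (z i))
        ((fun m : ℕ => (![x 0, m] : Fin 2 → ℕ)) m) =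
      (if validb (x 0) ∧ y = bitfn (x 0) m then (1:ℝ) else 0) * (1/2)^(m+1) := by
    intro m
    show Gfun ![x 0, m] y * _ = _
    rw [Fin.prod_univ_two]
    simp [Gfun, dirac', GeoFn]
  rw [tsum_congr hterm]
  simp only [I2P]
  by_cases hv : validb (x 0)
  · obtain ⟨hbpos, hab⟩ := hv
    have hbr : (0:ℝ) < ((Nat.unpair (x 0)).2 : ℝ) := by exact_mod_cast hbpos
    have hcond : 0 < (Nat.unpair (x 0)).2 ∧
        0 ≤ ((Nat.unpair (x 0)).1 : ℝ) / ((Nat.unpair (x 0)).2 : ℝ) ∧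
        ((Nat.unpair (x 0)).1 : ℝ) / ((Nat.unpair (x 0)).2 : ℝ) ≤ 1 :=
      ⟨hbpos, div_nonneg (Nat.cast_nonneg _) (Nat.cast_nonneg _),
        (div_le_one hbr).mpr (by exact_mod_cast hab)⟩
    rw [if_pos hcond]
    have hstep : ∀ m : ℕ, (if validb (x 0) ∧ y = bitfn (x 0) m then (1:ℝ) else 0) * (1/2)^(m+1) =
        (if y = bitab (Nat.unpair (x 0)).1 (Nat.unpair (x 0)).2 m then (1:ℝ) else 0) *
          (1/2)^(m+1) := by
      intro m
      congr 1
      simp [validb, bitfn, hbpos, hab]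
    rw [tsum_congr hstep]
    rcases y with _ | _ | y
    · rw [bit_tsum_zero' hbpos hab]
      norm_num
    · rw [bit_tsum_one hbpos hab]
      norm_num
    · rw [bit_tsum_ge2 _ (by omega)]
      norm_num
  · have hstep : ∀ m : ℕ, (if validb (x 0) ∧ y = bitfn (x 0) m then (1:ℝ) else 0) *
        (1/2)^(m+1) = 0 := by
      intro m
      rw [if_neg (fun hc => hv hc.1), zero_mul]
    rw [tsum_congr hstep, tsum_zero]
    rw [if_neg]
    rintro ⟨h1, -, h3⟩
    refine hv ⟨h1, ?_⟩
    have hbr : (0:ℝ) < ((Nat.unpair (x 0)).2 : ℝ) := by exact_mod_cast h1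
    have := (div_le_one hbr).mp h3
    exact_mod_cast this
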